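/- Let k be a field of characteristic p > 0 and let S be a k-algebra containing elements x, y with [x,y] = 1 and such that x^p and y^p are central in S. Let S' be the centralizer of y in S (equivalently, the kernel of the derivation D = ad(y)). Then the multiplication map k[x] ⊗_{k[x^p]} S' → S is an isomorphism; equivalently, every element of S can be written uniquely as Σ_{i=0}^{p−1} x^i s_i with s_i ∈ S'. -/

import Mathlib

open Finset

section WeylAux

variable (k : Type*) [Field k] {S : Type*} [Ring S] [Algebra k S]

/-- The derivation `D s = s*y - y*s` (negative of `ad y`). -/
noncomputable def weylD (y : S) : S →ₗ[k] S :=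
  LinearMap.mulRight k y - LinearMap.mulLeft k y

variable {k}

@[simp] lemma weylD_apply (y s : S) : weylD k y s = s * y - y * s := rfl

lemma weylD_mul (y a b : S) :
    weylD k y (a * b) = a * weylD k y b + weylD k y a * b := by
  simp only [weylD_apply]; noncomm_ring

variable {p : ℕ} [Fact p.Prime] [CharP k p] {x y : S}

lemma weylD_x (hxy : x * y - y * x = 1) : weylD k y x = 1 := by simpa using hxy

lemma weylD_xpow (hxy : x * y - y * x = 1) (n : ℕ) :
    weylD k y (x ^ n) = n • x ^ (n - 1) := by
  induction n with
  | zero => simp [weylD]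
  | succ n ih =>
      rw [pow_succ', weylD_mul, ih, weylD_x hxy, one_mul]
      cases n with
      | zero => simp
      | succ m =>
          rw [Nat.add_sub_cancel, Nat.add_sub_cancel, mul_smul_comm, ← pow_succ',
            succ_nsmul, succ_nsmul]
          abel_nf
          module

lemma weylD_pow_xpow_mul (hxy : x * y - y * x = 1) (t : S) (ht : weylD k y t = 0)
    (i j : ℕ) :
    ((weylD k y) ^ j) (x ^ i * t) = (i.descFactorial j) • (x ^ (i - j) * t) := by
  induction j with
  | zero => simp
  | succ j ih =>
      rw [pow_succ', Module.End.mul_apply, ih, map_nsmul, weylD_mul, ht, mul_zero,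
        zero_add, weylD_xpow hxy, smul_mul_assoc, smul_smul, Nat.descFactorial_succ,
        Nat.sub_sub, Nat.mul_comm]

lemma weylD_pow_p [Nontrivial S] (hyp : y ^ p ∈ Set.center S) :
    ((weylD k y : S →ₗ[k] S)) ^ p = 0 := by
  haveI : Nontrivial (Module.End k S) :=
    ⟨⟨1, 0, fun h => one_ne_zero (congrArg (fun f : Module.End k S => f 1) h :
      (1 : S) = 0)⟩⟩
  haveI : CharP (Module.End k S) p := charP_of_injective_algebraMap' (A := Module.End k S) k p
  have hc : Commute (LinearMap.mulRight k y) (LinearMap.mulLeft k y) := by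
    ext s
    simp [mul_assoc]
  rw [weylD, sub_pow_char_of_commute p hc, LinearMap.pow_mulRight, LinearMap.pow_mulLeft]
  ext s
  have := Semigroup.mem_center_iff.mp hyp s
  simp [this]

lemma weylD_exists_decomp (hxy : x * y - y * x = 1) :
    ∀ n, n ≤ p → ∀ s : S, ((weylD k y) ^ n) s = 0 →
      ∃ f : ℕ → S, (∀ i, weylD k y (f i) = 0) ∧ (∀ i, n ≤ i → f i = 0) ∧
        s = ∑ i ∈ range p, x ^ i * f i := by
  intro n
  induction n with
  | zero =>
      intro _ s hs
      simp only [pow_zero, Module.End.one_apply] at hs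
      exact ⟨fun _ => 0, fun _ => map_zero _, fun _ _ => rfl, by simp [hs]⟩
  | succ n ih =>
      intro hn1 s hs
      have hds : ((weylD k y) ^ n) (weylD k y s) = 0 := by
        rw [← Module.End.mul_apply, ← pow_succ]; exact hs
      obtain ⟨g, hg1, hg2, hg3⟩ := ih (Nat.le_of_succ_le hn1) (weylD k y s) hds
      set t : S := ∑ i ∈ range p, (((i + 1 : ℕ) : k))⁻¹ • (x ^ (i + 1) * g i) with ht_def
      have key : ∀ i ∈ range p,
          weylD k y ((((i + 1 : ℕ) : k))⁻¹ • (x ^ (i + 1) * g i)) = x ^ i * g i := by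
        intro i _
        rw [map_smul, weylD_mul, hg1 i, mul_zero, zero_add, weylD_xpow hxy,
          Nat.add_sub_cancel, smul_mul_assoc]
        by_cases hni : n ≤ i
        · rw [hg2 i hni, mul_zero, smul_zero, smul_zero]
        · have hne : ((i + 1 : ℕ) : k) ≠ 0 := by
            rw [Ne, CharP.cast_eq_zero_iff k p]
            exact Nat.not_dvd_of_pos_of_lt (Nat.succ_pos i) (by omega)
          rw [← Nat.cast_smul_eq_nsmul k, inv_smul_smul₀ hne]
      have hDt : weylD k y t = weylD k y s := by
        rw [ht_def, map_sum, Finset.sum_congr rfl key, ← hg3]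
      refine ⟨fun i => if i = 0 then s - t else ((i : ℕ) : k)⁻¹ • g (i - 1),
        ?_, ?_, ?_⟩
      · intro i
        by_cases hi : i = 0
        · simp [hi, map_sub, hDt]
        · simp [hi, map_smul, hg1 (i - 1)]
      · intro i hi
        have hi0 : i ≠ 0 := by omega
        simp only [hi0, if_false]
        rw [hg2 (i - 1) (by omega), smul_zero]
      · obtain ⟨q, hq⟩ : ∃ q, p = q + 1 := ⟨p - 1, by have := (Fact.out : p.Prime).pos; omega⟩
        have hgq : g (p - 1) = 0 := hg2 _ (by omega)
        rw [hq] at hgq ⊢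
        simp only [Nat.add_sub_cancel] at hgq
        rw [Finset.sum_range_succ']
        have h1 : ∑ i ∈ range q,
            x ^ (i + 1) * (if i + 1 = 0 then s - t else (((i + 1 : ℕ)) : k)⁻¹ • g (i + 1 - 1))
            = t := by
          rw [ht_def, hq, Finset.sum_range_succ, hgq, mul_zero, smul_zero, add_zero]
          refine Finset.sum_congr rfl fun i _ => ?_
          simp only [Nat.succ_ne_zero, if_false, Nat.add_sub_cancel, mul_smul_comm]
        rw [h1, pow_zero, one_mul]
        beta_reduce
        rw [if_pos rfl, add_comm, sub_add_cancel]

lemma weylD_decomp_unique (hxy : x * y - y * x = 1) (h : ℕ → S)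
    (hh : ∀ i, weylD k y (h i) = 0)
    (hsum : ∑ i ∈ range p, x ^ i * h i = 0) : ∀ i, i < p → h i = 0 := by
  have key : ∀ m, m < p → (∀ j, m < j → j < p → h j = 0) → h m = 0 := by
    intro m hm hup
    have h1 : ((weylD k y) ^ m) (∑ i ∈ range p, x ^ i * h i) = 0 := by
      rw [hsum, map_zero]
    rw [map_sum, Finset.sum_congr rfl
      (fun i _ => weylD_pow_xpow_mul hxy (h i) (hh i) i m)] at h1
    rw [Finset.sum_eq_single m
      (fun b hb hbm => by
        rcases lt_or_gt_of_ne hbm with hlt | hgt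
        · rw [Nat.descFactorial_eq_zero_iff_lt.mpr hlt, zero_smul]
        · rw [hup b hgt (mem_range.mp hb), mul_zero, smul_zero])
      (fun hm' => absurd (mem_range.mpr hm) hm')] at h1
    rw [Nat.descFactorial_self, Nat.sub_self, pow_zero, one_mul,
      ← Nat.cast_smul_eq_nsmul k] at h1
    have hfac : ((m.factorial : ℕ) : k) ≠ 0 := by
      rw [Ne, CharP.cast_eq_zero_iff k p]
      intro hd
      exact absurd ((Nat.Prime.dvd_factorial Fact.out).mp hd) (by omega)
    exact (smul_eq_zero.mp h1).resolve_left hfac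
  have main : ∀ d m, m < p → p ≤ m + d → h m = 0 := by
    intro d
    induction d with
    | zero => intro m hm hmd; exact absurd hm (by omega)
    | succ d ihd =>
        intro m hm _
        exact key m hm fun j hj hjp => ihd j hjp (by omega)
  intro i hi
  exact main p i hi (by omega)

end WeylAux

/-- Let `S` be an algebra over a field `k` of characteristic `p > 0` containing
`x, y` with `[x,y] = 1` and `x^p, y^p` central.  Let `S'` be the centralizer of `y`.
Then every element of `S` is uniquely of the form `Σ_{i=0}^{p-1} x^i sᵢ` with
`sᵢ ∈ S'` (equivalently, the multiplication map `k[x] ⊗_{k[x^p]} S' → S` is an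
isomorphism). -/
theorem weyl_pair_decomposition (k : Type*) [Field k] (p : ℕ) [Fact p.Prime]
    [CharP k p] (S : Type*) [Ring S] [Algebra k S] (x y : S)
    (hxy : x * y - y * x = 1)
    (hxp : x ^ p ∈ Set.center S) (hyp : y ^ p ∈ Set.center S) :
    ∀ s : S, ∃! f : Fin p → S,
      (∀ i, y * f i = f i * y) ∧ s = ∑ i : Fin p, x ^ (i : ℕ) * f i := by
  intro s
  rcases subsingleton_or_nontrivial S with hS | hS
  · exact ⟨0, ⟨fun i => Subsingleton.elim _ _, Subsingleton.elim _ _⟩,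
      fun g _ => Subsingleton.elim _ _⟩
  have hps : ((weylD k y) ^ p) s = 0 := by rw [weylD_pow_p (k := k) hyp]; rfl
  obtain ⟨f, hf1, hf2, hf3⟩ := weylD_exists_decomp hxy p le_rfl s hps
  refine ⟨fun i => f i, ⟨fun i => ?_, ?_⟩, ?_⟩
  · have := hf1 (i : ℕ)
    rw [weylD_apply, sub_eq_zero] at this
    exact this.symm
  · rw [hf3, ← Fin.sum_univ_eq_sum_range (fun i => x ^ i * f i) p]
  · rintro g ⟨hg1, hg2⟩
    set G : ℕ → S := fun j => if hj : j < p then g ⟨j, hj⟩ else 0 with hG_def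
    have hGsum : ∑ i : Fin p, x ^ (i : ℕ) * g i = ∑ j ∈ range p, x ^ j * G j := by
      rw [← Fin.sum_univ_eq_sum_range (fun j => x ^ j * G j) p]
      refine Finset.sum_congr rfl fun i _ => ?_
      simp [hG_def, i.isLt]
    have huniq : ∀ j, j < p → G j - f j = 0 := by
      refine weylD_decomp_unique (k := k) hxy _ (fun j => ?_) ?_
      · rw [map_sub]
        by_cases hj : j < p
        · have : weylD k y (G j) = 0 := by
            have := hg1 ⟨j, hj⟩
            simp only [hG_def, hj, dif_pos]
            rw [weylD_apply, sub_eq_zero]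
            exact this.symm
          rw [this, hf1 j, sub_zero]
        · simp only [hG_def, hj, dif_neg, not_false_iff]
          rw [map_zero, hf1 j, sub_zero]
      · have : ∑ i ∈ range p, x ^ i * (G i - f i)
            = (∑ i ∈ range p, x ^ i * G i) - ∑ i ∈ range p, x ^ i * f i := by
          rw [← Finset.sum_sub_distrib]
          exact Finset.sum_congr rfl fun i _ => mul_sub _ _ _
        rw [this, ← hGsum, ← hg2, ← hf3, sub_self]
    funext i
    have := huniq (i : ℕ) i.isLt
    rw [sub_eq_zero] at this
    have hGi : G (i : ℕ) = g i := by simp [hG_def, i.isLt]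
    rw [hGi] at this
    exact this
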